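/- Let n be an odd positive integer, let C ⊆ ℝ² be a strict closed convex cone with nonempty interior, and let g ∈ GL(2,ℤ) preserve C. Let P : ℝ² → ℝ be a homogeneous polynomial function of degree n such that P(g·v) = P(v) for all v ∈ ℝ², and such that P(v₀) ≠ 0 for some v₀ in the interior of C. Then g² is the identity matrix. -/

import Mathlib

open Matrix Polynomial Filter


lemma aux_CH {R : Type*} [CommRing R] (A : Matrix (Fin 2) (Fin 2) R) :
    A * A = A.trace • A - A.det • (1 : Matrix (Fin 2) (Fin 2) R) := by
  ext i j
  fin_cases i <;> fin_cases j <;>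
    simp [Matrix.mul_apply, Matrix.trace, Matrix.det_fin_two, Fin.sum_univ_two,
      Matrix.one_apply, Matrix.diag] <;> ring

lemma aux_eval_smul {n : ℕ} {P : MvPolynomial (Fin 2) ℝ} (hP : P.IsHomogeneous n)
    (c : ℝ) (v : Fin 2 → ℝ) :
    MvPolynomial.eval (c • v) P = c ^ n * MvPolynomial.eval v P := by
  rw [MvPolynomial.eval_eq', MvPolynomial.eval_eq', Finset.mul_sum]
  refine Finset.sum_congr rfl fun d hd => ?_
  have hdn : d 0 + d 1 = n := by
    have h := hP (MvPolynomial.mem_support_iff.mp hd)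
    have h2 : (Finsupp.weight (1 : Fin 2 → ℕ)) d = d 0 + d 1 := by
      simp [Finsupp.weight_apply, Finsupp.sum_fintype, Fin.sum_univ_two]
    rw [h2] at h
    omega
  simp only [Fin.prod_univ_two, Pi.smul_apply, smul_eq_mul, mul_pow]
  rw [← hdn, pow_add]
  ring

lemma aux_pcase (n : ℕ) (hn : Odd n) (P : MvPolynomial (Fin 2) ℝ) (hP : P.IsHomogeneous n)
    (H : Matrix (Fin 2) (Fin 2) ℝ) (s : ℝ) (hs : 2 < s)
    (hHH : ∀ v, H.mulVec (H.mulVec v) = s • H.mulVec v - v)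
    (hinvH : ∀ v, MvPolynomial.eval (H.mulVec v) P = MvPolynomial.eval v P)
    (v₀ : Fin 2 → ℝ) (hv₀ : MvPolynomial.eval v₀ P ≠ 0) : False := by
  have hs4 : (0:ℝ) ≤ s ^ 2 - 4 := by nlinarith
  have hr0 : 0 ≤ Real.sqrt (s ^ 2 - 4) := Real.sqrt_nonneg _
  have hr2 : Real.sqrt (s ^ 2 - 4) ^ 2 = s ^ 2 - 4 := Real.sq_sqrt hs4
  obtain ⟨σ, τ, hσ1, hστ1, hsum⟩ :
      ∃ σ τ : ℝ, 1 < σ ∧ σ * τ = 1 ∧ σ + τ = s := by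
    refine ⟨(s + Real.sqrt (s ^ 2 - 4)) / 2, (s - Real.sqrt (s ^ 2 - 4)) / 2, ?_, ?_, by ring⟩
    · nlinarith
    · nlinarith
  have hσ0 : 0 < σ := lt_trans one_pos hσ1
  have hτinv : τ = σ⁻¹ := by
    field_simp
    linarith [hστ1]
  have hτ0 : 0 < τ := by rw [hτinv]; positivity
  have hδ : σ - τ ≠ 0 := by
    have : τ < 1 := by rw [hτinv]; exact inv_lt_one_of_one_lt₀ hσ1
    intro h; linarith
  obtain ⟨u, w, hHu, hHw, huw⟩ :
      ∃ u w : Fin 2 → ℝ, H.mulVec u = σ • u ∧ H.mulVec w = τ • w ∧ u + w = v₀ := by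
    refine ⟨(σ - τ)⁻¹ • (H.mulVec v₀ - τ • v₀), (σ - τ)⁻¹ • (σ • v₀ - H.mulVec v₀),
      ?_, ?_, ?_⟩
    · rw [Matrix.mulVec_smul, Matrix.mulVec_sub, Matrix.mulVec_smul, hHH]
      rw [smul_comm]
      congr 1
      rw [smul_sub, smul_smul, hστ1, ← hsum, one_smul, add_smul]
      abel
    · rw [Matrix.mulVec_smul, Matrix.mulVec_sub, Matrix.mulVec_smul, hHH]
      rw [smul_comm]
      congr 1
      rw [smul_sub, smul_smul, mul_comm τ σ, hστ1, ← hsum, one_smul, add_smul]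
      abel
    · rw [← smul_add]
      have h5 : H.mulVec v₀ - τ • v₀ + (σ • v₀ - H.mulVec v₀) = (σ - τ) • v₀ := by
        rw [sub_smul]; abel
      rw [h5, smul_smul, inv_mul_cancel₀ hδ, one_smul]
  have hpow : ∀ m : ℕ, (H ^ m).mulVec v₀ = σ ^ m • u + τ ^ m • w := by
    intro m
    induction m with
    | zero => simp [huw]
    | succ m ih =>
      rw [pow_succ', ← Matrix.mulVec_mulVec, ih, Matrix.mulVec_add, Matrix.mulVec_smul,
        Matrix.mulVec_smul, hHu, hHw, smul_smul, smul_smul, ← pow_succ, ← pow_succ]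
  have hinvpow : ∀ m : ℕ, MvPolynomial.eval ((H ^ m).mulVec v₀) P = MvPolynomial.eval v₀ P := by
    intro m
    induction m with
    | zero => simp
    | succ m ih =>
      rw [pow_succ', ← Matrix.mulVec_mulVec, hinvH, ih]
  set Q : Polynomial ℝ :=
    MvPolynomial.eval₂ Polynomial.C
      (fun i => Polynomial.C (u i) * Polynomial.X ^ 2 + Polynomial.C (w i)) P with hQdef
  have hQeval : ∀ x : ℝ, Q.eval x = MvPolynomial.eval (fun i => u i * x ^ 2 + w i) P := by
    intro x
    have h1 : Q.eval x = (Polynomial.evalRingHom x) Q := rfl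
    rw [h1, hQdef, MvPolynomial.eval₂_comp_left (Polynomial.evalRingHom x)]
    have h2 : (Polynomial.evalRingHom x).comp (Polynomial.C : ℝ →+* Polynomial ℝ)
        = RingHom.id ℝ := by
      ext a; simp
    have h3 : (⇑(Polynomial.evalRingHom x) ∘
        fun i => Polynomial.C (u i) * Polynomial.X ^ 2 + Polynomial.C (w i))
        = fun i => u i * x ^ 2 + w i := by
      funext i; simp
    rw [h2, h3, MvPolynomial.eval₂_id]
  have hQm : ∀ m : ℕ, Q.eval (σ ^ m) = (σ ^ m) ^ n * MvPolynomial.eval v₀ P := by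
    intro m
    have hx0 : (σ : ℝ) ^ m ≠ 0 := ne_of_gt (pow_pos hσ0 m)
    have harg : (fun i => u i * (σ ^ m) ^ 2 + w i)
        = (σ ^ m) • (σ ^ m • u + τ ^ m • w) := by
      funext i
      have hτm : τ ^ m = (σ ^ m)⁻¹ := by rw [hτinv, inv_pow]
      simp only [Pi.smul_apply, Pi.add_apply, smul_eq_mul, hτm]
      field_simp
    rw [hQeval, harg, aux_eval_smul hP, ← hpow, hinvpow]
  set R : Polynomial ℝ := Q - Polynomial.C (MvPolynomial.eval v₀ P) * Polynomial.X ^ n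
    with hRdef
  have hR0 : R = 0 := by
    apply Polynomial.eq_zero_of_infinite_isRoot
    refine Set.infinite_of_injective_forall_mem (f := fun m : ℕ => σ ^ m) ?_ ?_
    · have hmono : StrictMono (fun m : ℕ => σ ^ m) := fun a b h => pow_lt_pow_right₀ hσ1 h
      exact hmono.injective
    · intro m
      simp only [Set.mem_setOf_eq, Polynomial.IsRoot, hRdef, Polynomial.eval_sub,
        Polynomial.eval_mul, Polynomial.eval_C, Polynomial.eval_pow, Polynomial.eval_X]
      rw [hQm]
      ring
  have hev : R.eval (-1) = 0 := by rw [hR0]; simp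
  rw [hRdef] at hev
  simp only [Polynomial.eval_sub, Polynomial.eval_mul, Polynomial.eval_C,
    Polynomial.eval_pow, Polynomial.eval_X, hn.neg_one_pow] at hev
  rw [hQeval] at hev
  have harg : (fun i => u i * (-1 : ℝ) ^ 2 + w i) = v₀ := by
    funext i
    have h6 := congrFun huw i
    simpa using h6
  rw [harg] at hev
  apply hv₀
  linarith


/-- A parabolic (shear) matrix preserving a strict closed cone fixes the cone pointwise. -/
lemma aux_shear (C : Set (Fin 2 → ℝ)) (hclosed : IsClosed C)
    (hcone : ∀ v ∈ C, ∀ t : ℝ, 0 ≤ t → t • v ∈ C)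
    (hstrict : ∀ v : Fin 2 → ℝ, v ∈ C → -v ∈ C → v = 0)
    (G : Matrix (Fin 2) (Fin 2) ℝ)
    (hG2 : ∀ v, G.mulVec (G.mulVec v) = (2:ℝ) • G.mulVec v - v)
    (hmem : ∀ v ∈ C, G.mulVec v ∈ C) (hsur : ∀ v ∈ C, ∃ y ∈ C, G.mulVec y = v) :
    ∀ x ∈ C, G.mulVec x = x := by
  intro x hx
  suffices hz0 : G.mulVec x - x = 0 by exact sub_eq_zero.mp hz0
  set z := G.mulVec x - x with hz
  have hGx : G.mulVec x = x + z := by rw [hz]; abel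
  have hGz : G.mulVec z = z := by
    rw [hz, Matrix.mulVec_sub, hG2, two_smul]
    abel
  -- forward orbit
  have hfwd : ∀ m : ℕ, x + (m : ℝ) • z ∈ C := by
    intro m
    induction m with
    | zero => simpa using hx
    | succ m ih =>
      have h2 := hmem _ ih
      rw [Matrix.mulVec_add, Matrix.mulVec_smul, hGx, hGz] at h2
      have h3 : x + z + (m:ℝ) • z = x + ((m:ℕ) + 1 : ℝ) • z := by
        rw [add_smul, one_smul]; abel
      rw [h3] at h2
      convert h2 using 3
      push_cast
      ring
  -- backward orbit
  have hbwd : ∀ m : ℕ, x - (m : ℝ) • z ∈ C := by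
    intro m
    induction m with
    | zero => simpa using hx
    | succ m ih =>
      obtain ⟨y, hy, hyv⟩ := hsur _ ih
      have hy2 : y = (2:ℝ) • G.mulVec y - G.mulVec (G.mulVec y) := by
        rw [hG2 y, two_smul]; abel
      rw [hyv] at hy2
      have hGp : G.mulVec (x - (m:ℝ) • z) = x + z - (m:ℝ) • z := by
        rw [Matrix.mulVec_sub, Matrix.mulVec_smul, hGx, hGz]
      rw [hGp] at hy2
      have hyval : y = x - ((m + 1 : ℕ) : ℝ) • z := by
        rw [hy2]
        push_cast
        module
      rw [hyval] at hy
      exact hy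
  -- take limits
  have hlim : ∀ (w z' : Fin 2 → ℝ), (∀ m : ℕ, (1 / ((m:ℝ) + 1)) • w + z' ∈ C) → z' ∈ C := by
    intro w z' hw
    have ht : Tendsto (fun m : ℕ => (1 / ((m:ℝ) + 1)) • w + z') atTop (nhds z')  := by
      have h0 : Tendsto (fun m : ℕ => 1 / ((m:ℝ) + 1)) atTop (nhds 0) :=
        tendsto_one_div_add_atTop_nhds_zero_nat
      have h1 := (h0.smul_const w).add_const z'
      simpa using h1
    exact hclosed.mem_of_tendsto ht (Eventually.of_forall hw)
  have hzC : z ∈ C := by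
    apply hlim x z
    intro m
    have h5 := hcone _ (hfwd (m + 1)) (1 / ((m:ℝ) + 1)) (by positivity)
    have h6 : (1 / ((m:ℝ) + 1)) • (x + ((m + 1 : ℕ):ℝ) • z)
        = (1 / ((m:ℝ) + 1)) • x + z := by
      have hne : ((m:ℝ) + 1) ≠ 0 := by positivity
      rw [smul_add, smul_smul]
      push_cast
      rw [div_mul_cancel₀]
      · rw [one_smul]
      · exact hne
    rwa [h6] at h5
  have hnzC : -z ∈ C := by
    apply hlim x (-z)
    intro m
    have h5 := hcone _ (hbwd (m + 1)) (1 / ((m:ℝ) + 1)) (by positivity)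
    have h6 : (1 / ((m:ℝ) + 1)) • (x - ((m + 1 : ℕ):ℝ) • z)
        = (1 / ((m:ℝ) + 1)) • x + -z := by
      have hne : ((m:ℝ) + 1) ≠ 0 := by positivity
      rw [smul_sub, smul_smul]
      push_cast
      rw [div_mul_cancel₀ _ hne, one_smul]
      module
    rwa [h6] at h5
  exact hstrict z hzC hnzC


lemma aux_eq_one_of_fixes (C : Set (Fin 2 → ℝ)) (hint : (interior C).Nonempty)
    (G : Matrix (Fin 2) (Fin 2) ℝ) (hfix : ∀ x ∈ C, G.mulVec x = x) : G = 1 := by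
  obtain ⟨v, hv⟩ := hint
  have hvC : C ∈ nhds v := mem_interior_iff_mem_nhds.mp hv
  have key : ∀ e : Fin 2 → ℝ, G.mulVec e = e := by
    intro e
    have hcont : Continuous fun t : ℝ => v + t • e := by
      fun_prop
    have h0 : Tendsto (fun t : ℝ => v + t • e) (nhds 0) (nhds v) := by
      have := hcont.tendsto 0
      simpa using this
    have hev : ∀ᶠ t : ℝ in nhds 0, v + t • e ∈ C := h0.eventually_mem hvC
    obtain ⟨ε, hε, hball⟩ := Metric.eventually_nhds_iff.mp hev
    have htmem : v + (ε / 2) • e ∈ C := by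
      apply hball
      have : dist (ε / 2) 0 < ε := by
        rw [Real.dist_0_eq_abs, abs_of_pos (by positivity)]
        linarith
      exact this
    have h1 := hfix _ htmem
    have h2 := hfix v (mem_of_mem_nhds hvC)
    rw [Matrix.mulVec_add, Matrix.mulVec_smul, h2] at h1
    have h3 : (ε / 2) • G.mulVec e = (ε / 2) • e := by
      have := add_left_cancel h1
      exact this
    have hne : (ε / 2) ≠ 0 := by positivity
    exact smul_right_injective _ hne h3
  ext i j
  have h4 := congrFun (key (Pi.single j 1)) i
  rw [Matrix.mulVec_single] at h4
  simp only [Pi.smul_apply, Matrix.col_apply, op_smul_eq_mul, mul_one] at h4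
  simp only [h4, Matrix.one_apply, Pi.single_apply]

lemma aux_cast_eq_one {A : Matrix (Fin 2) (Fin 2) ℤ}
    (h : A.map (Int.cast : ℤ → ℝ) = 1) : A = 1 := by
  ext i j
  have h2 : (A.map (Int.cast : ℤ → ℝ)) i j = (1 : Matrix (Fin 2) (Fin 2) ℝ) i j := by rw [h]
  rw [Matrix.map_apply, Matrix.one_apply] at h2
  rw [Matrix.one_apply]
  by_cases hij : i = j <;> simp [hij] at h2 ⊢ <;> exact_mod_cast h2

lemma aux_map_mul (A B : Matrix (Fin 2) (Fin 2) ℤ) :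
    (A * B).map (Int.cast : ℤ → ℝ) = A.map (Int.cast : ℤ → ℝ) * B.map (Int.cast : ℤ → ℝ) := by
  ext i j
  simp only [Matrix.map_apply, Matrix.mul_apply, Fin.sum_univ_two]
  push_cast
  ring

theorem sq_eq_one_of_odd_invariant_form (n : ℕ) (hn : Odd n) (hn0 : 0 < n)
    (C : Set (Fin 2 → ℝ))
    (hclosed : IsClosed C) (hconv : Convex ℝ C)
    (hcone : ∀ v ∈ C, ∀ t : ℝ, 0 ≤ t → t • v ∈ C)
    (hstrict : ∀ v : Fin 2 → ℝ, v ∈ C → -v ∈ C → v = 0)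
    (hint : (interior C).Nonempty)
    (g : Matrix (Fin 2) (Fin 2) ℤ) (hg : g.det = 1 ∨ g.det = -1)
    (hpres : (fun v : Fin 2 → ℝ => (g.map (Int.cast : ℤ → ℝ)).mulVec v) '' C = C)
    (P : MvPolynomial (Fin 2) ℝ) (hP : P.IsHomogeneous n)
    (hinv : ∀ v : Fin 2 → ℝ,
      MvPolynomial.eval ((g.map (Int.cast : ℤ → ℝ)).mulVec v) P = MvPolynomial.eval v P)
    (hne : ∃ v₀ ∈ interior C, MvPolynomial.eval v₀ P ≠ 0) :
    g ^ 2 = 1 := by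
  set Gr : Matrix (Fin 2) (Fin 2) ℝ := g.map (Int.cast : ℤ → ℝ) with hGrdef
  -- basic cone facts
  have hGC : ∀ v ∈ C, Gr.mulVec v ∈ C := by
    intro v hv
    rw [← hpres]
    exact ⟨v, hv, rfl⟩
  have hGsur : ∀ v ∈ C, ∃ y ∈ C, Gr.mulVec y = v := by
    intro v hv
    rw [← hpres] at hv
    obtain ⟨y, hy, hyv⟩ := hv
    exact ⟨y, hy, hyv⟩
  have hadd : ∀ x ∈ C, ∀ y ∈ C, x + y ∈ C := by
    intro x hx y hy
    have h2 := hconv hx hy (by norm_num : (0:ℝ) ≤ 1/2) (by norm_num : (0:ℝ) ≤ 1/2)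
      (by norm_num)
    have h3 := hcone _ h2 2 (by norm_num)
    rw [smul_add, smul_smul, smul_smul] at h3
    norm_num at h3
    exact h3
  obtain ⟨v₁, hv₁⟩ := hint
  have hv₁C : v₁ ∈ C := interior_subset hv₁
  have hv₁0 : v₁ ≠ 0 := by
    intro h0
    rw [h0] at hv₁
    have hC0 : C ∈ nhds (0 : Fin 2 → ℝ) := mem_interior_iff_mem_nhds.mp hv₁
    have hcont : Continuous fun t : ℝ => t • (Pi.single 0 1 : Fin 2 → ℝ) := by fun_prop
    have h0t : Tendsto (fun t : ℝ => t • (Pi.single 0 1 : Fin 2 → ℝ)) (nhds 0)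
        (nhds 0) := by
      have := hcont.tendsto 0
      simpa using this
    have hev := h0t.eventually_mem hC0
    obtain ⟨ε, hε, hball⟩ := Metric.eventually_nhds_iff.mp hev
    have hdist : ∀ a : ℝ, |a| < ε → a • (Pi.single 0 1 : Fin 2 → ℝ) ∈ C := by
      intro a ha
      apply hball
      rwa [Real.dist_0_eq_abs]
    have hw : (ε/2) • (Pi.single 0 1 : Fin 2 → ℝ) ∈ C := by
      apply hdist
      rw [abs_of_pos (by positivity)]
      linarith
    have hnw : -((ε/2) • (Pi.single 0 1 : Fin 2 → ℝ)) ∈ C := by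
      rw [← neg_smul]
      apply hdist
      rw [abs_neg, abs_of_pos (by positivity)]
      linarith
    have := hstrict _ hw hnw
    have h5 := congrFun this 0
    simp [Pi.single_apply] at h5
    exact absurd h5 (by positivity)
  -- trace and det casts
  have htr : Gr.trace = ((g.trace : ℤ) : ℝ) := by
    rw [hGrdef, Matrix.trace_fin_two, Matrix.trace_fin_two, Matrix.map_apply,
      Matrix.map_apply]
    push_cast
    ring
  have hdet : Gr.det = ((g.det : ℤ) : ℝ) := by
    rw [hGrdef, Matrix.det_fin_two, Matrix.det_fin_two]
    simp only [Matrix.map_apply]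
    push_cast
    ring
  have hvec : ∀ v : Fin 2 → ℝ, Gr.mulVec (Gr.mulVec v)
      = ((g.trace : ℤ) : ℝ) • Gr.mulVec v - ((g.det : ℤ) : ℝ) • v := by
    intro v
    rw [Matrix.mulVec_mulVec, aux_CH Gr, htr, hdet, Matrix.sub_mulVec,
      Matrix.smul_mulVec, Matrix.smul_mulVec, Matrix.one_mulVec]
  -- H = Gr * Gr facts
  have hHC : ∀ v ∈ C, (Gr * Gr).mulVec v ∈ C := by
    intro v hv
    rw [← Matrix.mulVec_mulVec]
    exact hGC _ (hGC _ hv)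
  have hHsur : ∀ v ∈ C, ∃ y ∈ C, (Gr * Gr).mulVec y = v := by
    intro v hv
    obtain ⟨y1, hy1, hy1v⟩ := hGsur v hv
    obtain ⟨y2, hy2, hy2v⟩ := hGsur y1 hy1
    exact ⟨y2, hy2, by rw [← Matrix.mulVec_mulVec, hy2v, hy1v]⟩
  have hHinv : ∀ v : Fin 2 → ℝ,
      MvPolynomial.eval ((Gr * Gr).mulVec v) P = MvPolynomial.eval v P := by
    intro v
    rw [← Matrix.mulVec_mulVec, hinv, hinv]
  obtain ⟨v₀, hv₀int, hv₀⟩ := hne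
  -- case split
  rcases hg with hd | hd
  · -- det = 1
    rcases (by omega : g.trace = 0 ∨ g.trace = 1 ∨ g.trace = -1 ∨ g.trace = 2 ∨
        g.trace = -2 ∨ g.trace ≤ -3 ∨ 3 ≤ g.trace) with ht | ht | ht | ht | ht | ht | ht
    · -- trace 0 : rotation of order 4
      exfalso
      have h1 := hvec v₁
      rw [ht, hd] at h1
      simp only [Int.cast_zero, Int.cast_one, zero_smul, one_smul, zero_sub] at h1
      have h2 : -v₁ ∈ C := by
        rw [← h1]
        exact hGC _ (hGC _ hv₁C)
      exact hv₁0 (hstrict v₁ hv₁C h2)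
    · -- trace 1 : rotation of order 6
      exfalso
      have ha := hvec v₁
      rw [ht, hd] at ha
      simp only [Int.cast_one, one_smul] at ha
      have h3 := hvec (Gr.mulVec v₁)
      rw [ht, hd] at h3
      simp only [Int.cast_one, one_smul] at h3
      have h4 : Gr.mulVec (Gr.mulVec (Gr.mulVec v₁)) = -v₁ := by
        rw [h3, ha]
        abel
      have h2 : -v₁ ∈ C := by
        rw [← h4]
        exact hGC _ (hGC _ (hGC _ hv₁C))
      exact hv₁0 (hstrict v₁ hv₁C h2)
    · -- trace -1 : rotation of order 3
      exfalso
      have h1 := hvec v₁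
      rw [ht, hd] at h1
      have h2 : -v₁ = Gr.mulVec v₁ + Gr.mulVec (Gr.mulVec v₁) := by
        rw [h1]
        push_cast
        module
      have h3 : -v₁ ∈ C := by
        rw [h2]
        exact hadd _ (hGC _ hv₁C) _ (hGC _ (hGC _ hv₁C))
      exact hv₁0 (hstrict v₁ hv₁C h3)
    · -- trace 2 : shear, g = 1
      have hsh : ∀ v, Gr.mulVec (Gr.mulVec v) = (2:ℝ) • Gr.mulVec v - v := by
        intro v
        rw [hvec v, ht, hd]
        push_cast
        module
      have hfix := aux_shear C hclosed hcone hstrict Gr hsh hGC hGsur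
      have hG1 : Gr = 1 := aux_eq_one_of_fixes C ⟨v₁, hv₁⟩ Gr hfix
      have hg1 : g = 1 := aux_cast_eq_one hG1
      rw [hg1, one_pow]
    · -- trace -2 : g² is a shear, g² = 1
      have hsh : ∀ v, (Gr * Gr).mulVec ((Gr * Gr).mulVec v)
          = (2:ℝ) • (Gr * Gr).mulVec v - v := by
        intro v
        simp only [← Matrix.mulVec_mulVec]
        rw [hvec (Gr.mulVec (Gr.mulVec v)), hvec (Gr.mulVec v), hvec v, ht, hd]
        push_cast
        module
      have hfix := aux_shear C hclosed hcone hstrict (Gr * Gr) hsh hHC hHsur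
      have hH1 : Gr * Gr = 1 := aux_eq_one_of_fixes C ⟨v₁, hv₁⟩ (Gr * Gr) hfix
      have hg21 : (g * g).map (Int.cast : ℤ → ℝ) = 1 := by
        rw [aux_map_mul]
        exact hH1
      have := aux_cast_eq_one hg21
      rw [pow_two]
      exact this
    all_goals {
      -- |trace| ≥ 3 : hyperbolic, impossible
      exfalso
      have ht9 : (9 : ℤ) ≤ g.trace ^ 2 := by nlinarith
      have hs : (2:ℝ) < ((g.trace:ℤ):ℝ)^2 - 2 := by
        have h9r : (9:ℝ) ≤ ((g.trace:ℤ):ℝ)^2 := by exact_mod_cast ht9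
        linarith
      have hHH : ∀ v, (Gr * Gr).mulVec ((Gr * Gr).mulVec v)
          = (((g.trace:ℤ):ℝ)^2 - 2) • (Gr * Gr).mulVec v - v := by
        intro v
        simp only [← Matrix.mulVec_mulVec]
        rw [hvec (Gr.mulVec (Gr.mulVec v)), hvec (Gr.mulVec v), hvec v, hd]
        push_cast
        module
      exact aux_pcase n hn P hP (Gr * Gr) _ hs hHH hHinv v₀ hv₀
    }
  · -- det = -1
    by_cases ht : g.trace = 0
    · -- g² = 1 by Cayley–Hamilton
      have h1 : Gr * Gr = 1 := by
        rw [aux_CH Gr, htr, hdet, ht, hd]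
        push_cast
        simp
      have hg21 : (g * g).map (Int.cast : ℤ → ℝ) = 1 := by
        rw [aux_map_mul]
        exact h1
      have := aux_cast_eq_one hg21
      rw [pow_two]
      exact this
    · -- hyperbolic, impossible
      exfalso
      have ht1 : (1 : ℤ) ≤ g.trace ^ 2 := by
        rcases lt_or_gt_of_ne ht with h | h <;> nlinarith
      have hs : (2:ℝ) < ((g.trace:ℤ):ℝ)^2 + 2 := by
        have h1r : (1:ℝ) ≤ ((g.trace:ℤ):ℝ)^2 := by exact_mod_cast ht1
        linarith
      have hHH : ∀ v, (Gr * Gr).mulVec ((Gr * Gr).mulVec v)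
          = (((g.trace:ℤ):ℝ)^2 + 2) • (Gr * Gr).mulVec v - v := by
        intro v
        simp only [← Matrix.mulVec_mulVec]
        rw [hvec (Gr.mulVec (Gr.mulVec v)), hvec (Gr.mulVec v), hvec v, hd]
        push_cast
        module
      exact aux_pcase n hn P hP (Gr * Gr) _ hs hHH hHinv v₀ hv₀
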